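/- Let H be a Hopf algebra with invertible antipode, B a braided-commutative Yetter–Drinfeld H-module algebra. For a left H-comodule V with coaction ξ ↦ ξ₍₁₎ ⊗ ξ₍₂₎, define on the relative Hopf module X = V ⊗ B the map π(a)(ξ ⊗ b) = ξ₍₂₎ ⊗ (S⁻¹(ξ₍₁₎) ▷ a) b (extended B-linearly). Then π : B → End(X) is a unital algebra homomorphism, i.e. π(a a') = π(a) π(a') and π(1) = id. -/

import Mathlib

open TensorProduct LinearMap

noncomputable section

variable (k H B : Type) [Field k]
variable [Ring H] [HopfAlgebra k H] [Ring B] [Algebra k B]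

/-- The lifted action map `H ⊗ B → B`. -/
def actT (act : H →ₗ[k] B →ₗ[k] B) : H ⊗[k] B →ₗ[k] B := TensorProduct.lift act

/-- `(Δ x) ⊗ (a ⊗ b) ↦ (x₍₁₎ ▷ a)(x₍₂₎ ▷ b)`. -/
def maMap (act : H →ₗ[k] B →ₗ[k] B) : (H ⊗[k] H) ⊗[k] (B ⊗[k] B) →ₗ[k] B :=
  (LinearMap.mul' k B) ∘ₗ (TensorProduct.map (actT k H B act) (actT k H B act)) ∘ₗ
    (TensorProduct.tensorTensorTensorComm k H H B B).toLinearMap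

/-- `a ⊗ b ↦ b₍₂₎ (S⁻¹(b₍₁₎) ▷ a)`. -/
def braid (act : H →ₗ[k] B →ₗ[k] B) (Sinv : H →ₗ[k] H) (coact : B →ₗ[k] H ⊗[k] B) :
    B ⊗[k] B →ₗ[k] B :=
  (LinearMap.mul' k B) ∘ₗ (TensorProduct.comm k B B).toLinearMap
    ∘ₗ (TensorProduct.map (actT k H B act) LinearMap.id)
    ∘ₗ (TensorProduct.map (TensorProduct.map Sinv LinearMap.id) LinearMap.id)
    ∘ₗ (TensorProduct.map (TensorProduct.comm k B H).toLinearMap LinearMap.id)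
    ∘ₗ (TensorProduct.assoc k B H B).symm.toLinearMap
    ∘ₗ (TensorProduct.map LinearMap.id coact)

/-- `x ↦ x₍₁₎ ⊗ (x₍₂₎ ⊗ x₍₃₎)`. -/
def comul₂ : H →ₗ[k] H ⊗[k] (H ⊗[k] H) :=
  (TensorProduct.map LinearMap.id Coalgebra.comul) ∘ₗ Coalgebra.comul

/-- `(x₍₂₎ ⊗ x₍₃₎) ⊗ a₍₂₎ ↦ S(x₍₃₎) ⊗ (x₍₂₎ ▷ a₍₂₎)`. -/
def innerYD (act : H →ₗ[k] B →ₗ[k] B) : (H ⊗[k] H) ⊗[k] B →ₗ[k] H ⊗[k] B :=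
  (TensorProduct.map (HopfAlgebra.antipode (R := k)) (actT k H B act))
    ∘ₗ (TensorProduct.assoc k H H B).toLinearMap
    ∘ₗ (TensorProduct.map (TensorProduct.comm k H H).toLinearMap LinearMap.id)

/-- `x ⊗ a ↦ x₍₁₎ a₍₁₎ S(x₍₃₎) ⊗ (x₍₂₎ ▷ a₍₂₎)`, the right-hand side of the
Yetter–Drinfeld compatibility condition. -/
def rhsYD (act : H →ₗ[k] B →ₗ[k] B) (coact : B →ₗ[k] H ⊗[k] B) :
    H ⊗[k] B →ₗ[k] H ⊗[k] B :=
  (TensorProduct.map (LinearMap.mul' k H) LinearMap.id)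
    ∘ₗ (TensorProduct.assoc k H H B).symm.toLinearMap
    ∘ₗ (TensorProduct.map (LinearMap.mul' k H) (innerYD k H B act))
    ∘ₗ (TensorProduct.tensorTensorTensorComm k H (H ⊗[k] H) H B).toLinearMap
    ∘ₗ (TensorProduct.map (comul₂ k H) coact)

variable {k H B} in
/-- A braided-commutative Yetter–Drinfeld algebra structure on `B` over the Hopf
algebra `H` (with invertible antipode `Sinv`): `B` is a left `H`-module algebra
(action `act`), a left `H`-comodule algebra (coaction `coact`), the Yetter–Drinfeld
compatibility holds, and braided commutativity `a b = b₍₂₎ (S⁻¹(b₍₁₎) ▷ a)` holds. -/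
structure BraidedCommYD (act : H →ₗ[k] B →ₗ[k] B) (coact : B →ₗ[k] H ⊗[k] B)
    (Sinv : H →ₗ[k] H) : Prop where
  Sinv_antipode : ∀ x : H, Sinv (HopfAlgebra.antipode (R := k) x) = x
  antipode_Sinv : ∀ x : H, HopfAlgebra.antipode (R := k) (Sinv x) = x
  act_unit : ∀ a : B, act 1 a = a
  act_mulH : ∀ (x y : H) (a : B), act (x * y) a = act x (act y a)
  act_one : ∀ x : H, act x 1 = Coalgebra.counit (R := k) x • (1 : B)
  act_mul : ∀ (x : H) (a b : B),
    act x (a * b) = maMap k H B act (Coalgebra.comul x ⊗ₜ[k] (a ⊗ₜ[k] b))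
  coact_one : coact 1 = 1
  coact_mul : ∀ a b : B, coact (a * b) = coact a * coact b
  coact_coassoc : ∀ a : B,
    (TensorProduct.map Coalgebra.comul LinearMap.id) (coact a)
      = (TensorProduct.assoc k H H B).symm ((TensorProduct.map LinearMap.id coact) (coact a))
  coact_counit : ∀ a : B,
    (TensorProduct.lid k B) ((TensorProduct.map (Coalgebra.counit (R := k)) LinearMap.id) (coact a)) = a
  yd : ∀ (x : H) (a : B), coact (act x a) = rhsYD k H B act coact (x ⊗ₜ[k] a)
  braided : ∀ a b : B, a * b = braid k H B act Sinv coact (a ⊗ₜ[k] b)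

variable (V W : Type) [AddCommGroup V] [Module k V] [AddCommGroup W] [Module k W]

/-- `a ⊗ (h ⊗ b) ↦ (S⁻¹(h) ▷ a) b`. -/
def innerPi (act : H →ₗ[k] B →ₗ[k] B) (Sinv : H →ₗ[k] H) :
    B ⊗[k] (H ⊗[k] B) →ₗ[k] B :=
  (LinearMap.mul' k B)
    ∘ₗ (TensorProduct.map (actT k H B act) LinearMap.id)
    ∘ₗ (TensorProduct.map (TensorProduct.comm k B H).toLinearMap LinearMap.id)
    ∘ₗ (TensorProduct.assoc k B H B).symm.toLinearMap
    ∘ₗ (TensorProduct.map LinearMap.id (TensorProduct.map Sinv LinearMap.id))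

/-- The left `B`-action `π(a)(ξ ⊗ b) = ξ₍₂₎ ⊗ (S⁻¹(ξ₍₁₎) ▷ a) b` on the relative Hopf
module `V ⊗ B`, as a map `B ⊗ (V ⊗ B) → V ⊗ B`. -/
def piMap (act : H →ₗ[k] B →ₗ[k] B) (Sinv : H →ₗ[k] H)
    (coactV : V →ₗ[k] H ⊗[k] V) : B ⊗[k] (V ⊗[k] B) →ₗ[k] V ⊗[k] B :=
  (TensorProduct.map LinearMap.id (innerPi k H B act Sinv))
    ∘ₗ (TensorProduct.leftComm k B V (H ⊗[k] B)).toLinearMap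
    ∘ₗ (TensorProduct.map LinearMap.id (TensorProduct.assoc k V H B).toLinearMap)
    ∘ₗ (TensorProduct.map LinearMap.id
          (TensorProduct.map (TensorProduct.comm k H V).toLinearMap LinearMap.id))
    ∘ₗ (TensorProduct.map LinearMap.id (TensorProduct.map coactV LinearMap.id))

/-- The map `π : B → End(V ⊗ B)`, `π(a)(ξ ⊗ b) = ξ₍₂₎ ⊗ (S⁻¹(ξ₍₁₎) ▷ a) b`. -/
def piAct (act : H →ₗ[k] B →ₗ[k] B) (Sinv : H →ₗ[k] H)
    (coactV : V →ₗ[k] H ⊗[k] V) : B →ₗ[k] (V ⊗[k] B) →ₗ[k] (V ⊗[k] B) :=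
  TensorProduct.curry (piMap k H B V act Sinv coactV)

section AuxHopf

open Coalgebra HopfAlgebra

variable {k H}

/-- Convolution product on linear maps from a coalgebra to an algebra. -/
noncomputable def aconv {C : Type} [Ring C] [Algebra k C] (f g : H →ₗ[k] C) : H →ₗ[k] C :=
  LinearMap.mul' k C ∘ₗ TensorProduct.map f g ∘ₗ Coalgebra.comul

/-- Convolution unit. -/
noncomputable def acunit (C : Type) [Ring C] [Algebra k C] : H →ₗ[k] C :=
  Algebra.linearMap k C ∘ₗ Coalgebra.counit

theorem aconv_apply {C : Type} [Ring C] [Algebra k C] (f g : H →ₗ[k] C) (x : H) :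
    aconv f g x = LinearMap.mul' k C (TensorProduct.map f g (Coalgebra.comul x)) := rfl

theorem aconv_assoc {C : Type} [Ring C] [Algebra k C] (f g h : H →ₗ[k] C) :
    aconv (aconv f g) h = aconv f (aconv g h) := by
  have hF1 : LinearMap.mul' k C ∘ₗ TensorProduct.map (aconv f g) h
      = (LinearMap.mul' k C ∘ₗ
          TensorProduct.map (LinearMap.mul' k C ∘ₗ TensorProduct.map f g) h)
        ∘ₗ (Coalgebra.comul (R := k) (A := H)).rTensor H := by
    apply TensorProduct.ext'
    intro a b
    simp [aconv_apply]
  have hF2 : LinearMap.mul' k C ∘ₗ TensorProduct.map f (aconv g h)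
      = (LinearMap.mul' k C ∘ₗ
          TensorProduct.map f (LinearMap.mul' k C ∘ₗ TensorProduct.map g h))
        ∘ₗ (Coalgebra.comul (R := k) (A := H)).lTensor H := by
    apply TensorProduct.ext'
    intro a b
    simp [aconv_apply]
  have hF3 : (LinearMap.mul' k C ∘ₗ
        TensorProduct.map (LinearMap.mul' k C ∘ₗ TensorProduct.map f g) h)
      = (LinearMap.mul' k C ∘ₗ
          TensorProduct.map f (LinearMap.mul' k C ∘ₗ TensorProduct.map g h))
        ∘ₗ (TensorProduct.assoc k H H H).toLinearMap := by
    apply TensorProduct.ext_threefold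
    intro a b c
    simp [mul_assoc]
  ext x
  calc aconv (aconv f g) h x
      = (LinearMap.mul' k C ∘ₗ TensorProduct.map (aconv f g) h) (Coalgebra.comul x) := rfl
    _ = (LinearMap.mul' k C ∘ₗ
          TensorProduct.map (LinearMap.mul' k C ∘ₗ TensorProduct.map f g) h)
        ((Coalgebra.comul (R := k)).rTensor H (Coalgebra.comul x)) := by
        rw [LinearMap.congr_fun hF1 (Coalgebra.comul x)]; rfl
    _ = (LinearMap.mul' k C ∘ₗ
          TensorProduct.map f (LinearMap.mul' k C ∘ₗ TensorProduct.map g h))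
        ((TensorProduct.assoc k H H H)
          ((Coalgebra.comul (R := k)).rTensor H (Coalgebra.comul x))) := by
        rw [hF3]; rfl
    _ = (LinearMap.mul' k C ∘ₗ
          TensorProduct.map f (LinearMap.mul' k C ∘ₗ TensorProduct.map g h))
        ((Coalgebra.comul (R := k)).lTensor H (Coalgebra.comul x)) := by
        rw [Coalgebra.coassoc_apply]
    _ = aconv f (aconv g h) x := by
        have e2 := LinearMap.congr_fun hF2 (Coalgebra.comul x)
        simp only [LinearMap.comp_apply] at e2
        rw [aconv_apply, e2]
        rfl

theorem aconv_cunit_left {C : Type} [Ring C] [Algebra k C] (f : H →ₗ[k] C) :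
    aconv (acunit C) f = f := by
  have h1 : LinearMap.mul' k C ∘ₗ TensorProduct.map (acunit C) f
      = f ∘ₗ (TensorProduct.lid k H).toLinearMap
          ∘ₗ (Coalgebra.counit (R := k) (A := H)).rTensor H := by
    apply TensorProduct.ext'
    intro a b
    simp only [LinearMap.comp_apply, TensorProduct.map_tmul, LinearMap.mul'_apply,
      LinearMap.rTensor_tmul, LinearEquiv.coe_coe, TensorProduct.lid_tmul, map_smul,
      Algebra.linearMap_apply, acunit]
    rw [Algebra.smul_def]
  ext x
  calc aconv (acunit C) f x
      = (LinearMap.mul' k C ∘ₗ TensorProduct.map (acunit C) f) (Coalgebra.comul x) := rfl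
    _ = f ((TensorProduct.lid k H)
          ((Coalgebra.counit (R := k)).rTensor H (Coalgebra.comul x))) := by
        rw [LinearMap.congr_fun h1 (Coalgebra.comul x)]; rfl
    _ = f x := by rw [Coalgebra.rTensor_counit_comul]; simp

theorem aconv_cunit_right {C : Type} [Ring C] [Algebra k C] (f : H →ₗ[k] C) :
    aconv f (acunit C) = f := by
  have h1 : LinearMap.mul' k C ∘ₗ TensorProduct.map f (acunit C)
      = f ∘ₗ (TensorProduct.rid k H).toLinearMap
          ∘ₗ (Coalgebra.counit (R := k) (A := H)).lTensor H := by
    apply TensorProduct.ext'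
    intro a b
    simp only [LinearMap.comp_apply, TensorProduct.map_tmul, LinearMap.mul'_apply,
      LinearMap.lTensor_tmul, LinearEquiv.coe_coe, TensorProduct.rid_tmul, map_smul,
      Algebra.linearMap_apply, acunit]
    rw [Algebra.smul_def, ← Algebra.commutes]
  ext x
  calc aconv f (acunit C) x
      = (LinearMap.mul' k C ∘ₗ TensorProduct.map f (acunit C)) (Coalgebra.comul x) := rfl
    _ = f ((TensorProduct.rid k H)
          ((Coalgebra.counit (R := k)).lTensor H (Coalgebra.comul x))) := by
        rw [LinearMap.congr_fun h1 (Coalgebra.comul x)]; rfl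
    _ = f x := by rw [Coalgebra.lTensor_counit_comul]; simp

theorem aconv_comulS_comul :
    aconv (Coalgebra.comul ∘ₗ HopfAlgebra.antipode (R := k) (A := H)) Coalgebra.comul
      = acunit (H ⊗[k] H) := by
  have key : LinearMap.mul' k (H ⊗[k] H) ∘ₗ
        TensorProduct.map (Coalgebra.comul ∘ₗ HopfAlgebra.antipode (R := k)) Coalgebra.comul
      = Coalgebra.comul ∘ₗ LinearMap.mul' k H
          ∘ₗ (HopfAlgebra.antipode (R := k) (A := H)).rTensor H := by
    apply TensorProduct.ext'
    intro a b
    simp [← Bialgebra.comul_mul]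
  ext x
  calc aconv (Coalgebra.comul ∘ₗ HopfAlgebra.antipode (R := k)) Coalgebra.comul x
      = (LinearMap.mul' k (H ⊗[k] H) ∘ₗ
          TensorProduct.map (Coalgebra.comul ∘ₗ HopfAlgebra.antipode (R := k))
            Coalgebra.comul) (Coalgebra.comul x) := rfl
    _ = Coalgebra.comul (LinearMap.mul' k H
          ((HopfAlgebra.antipode (R := k)).rTensor H (Coalgebra.comul x))) := by
        rw [LinearMap.congr_fun key (Coalgebra.comul x)]; rfl
    _ = acunit (H ⊗[k] H) x := by
        rw [HopfAlgebra.mul_antipode_rTensor_comul_apply]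
        simp [acunit]

theorem aconv_comul_G :
    aconv (Coalgebra.comul (R := k) (A := H))
      ((TensorProduct.comm k H H).toLinearMap ∘ₗ
        TensorProduct.map (HopfAlgebra.antipode (R := k)) (HopfAlgebra.antipode (R := k))
          ∘ₗ Coalgebra.comul)
      = acunit (H ⊗[k] H) := by
  set S : H →ₗ[k] H := HopfAlgebra.antipode (R := k) with hSdef
  set Δ : H →ₗ[k] H ⊗[k] H := Coalgebra.comul (R := k) with hΔdef
  set μ2 : (H ⊗[k] H) ⊗[k] (H ⊗[k] H) →ₗ[k] H ⊗[k] H := LinearMap.mul' k (H ⊗[k] H) with hμ2def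
  set G : H →ₗ[k] H ⊗[k] H :=
    (TensorProduct.comm k H H).toLinearMap ∘ₗ TensorProduct.map S S ∘ₗ Δ with hGdef
  set P : H ⊗[k] (H ⊗[k] H) →ₗ[k] H ⊗[k] H :=
    μ2 ∘ₗ TensorProduct.map Δ ((TensorProduct.comm k H H).toLinearMap ∘ₗ TensorProduct.map S S)
    with hPdef
  have step1 : μ2 ∘ₗ TensorProduct.map Δ G = P ∘ₗ Δ.lTensor H := by
    apply TensorProduct.ext'
    intro a b
    simp [hPdef, hGdef]
  set R : ((H ⊗[k] H) ⊗[k] H) ⊗[k] H →ₗ[k] H ⊗[k] H :=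
    μ2 ∘ₗ TensorProduct.map LinearMap.id
        ((TensorProduct.comm k H H).toLinearMap ∘ₗ TensorProduct.map S S)
      ∘ₗ (TensorProduct.assoc k (H ⊗[k] H) H H).toLinearMap with hRdef
  have step2 : P ∘ₗ (TensorProduct.assoc k H H H).toLinearMap
      = R ∘ₗ (Δ.rTensor H).rTensor H := by
    apply TensorProduct.ext_threefold
    intro a c d
    simp [hPdef, hRdef]
  set N : H ⊗[k] H →ₗ[k] H :=
    (TensorProduct.rid k H).toLinearMap ∘ₗ (Coalgebra.counit (R := k) (A := H)).lTensor H
    with hNdef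
  set κ : H ⊗[k] H →ₗ[k] H := LinearMap.mul' k H ∘ₗ S.lTensor H with hκdef
  set ru : H →ₗ[k] H ⊗[k] H := (TensorProduct.mk k H H).flip 1 with hrudef
  set R2 : (H ⊗[k] (H ⊗[k] H)) ⊗[k] H →ₗ[k] H ⊗[k] H :=
    R ∘ₗ ((TensorProduct.assoc k H H H).symm.toLinearMap).rTensor H with hR2def
  have step3 : R2 ∘ₗ (Δ.lTensor H).rTensor H
      = ru ∘ₗ κ ∘ₗ TensorProduct.map N LinearMap.id := by
    apply TensorProduct.ext_threefold
    intro a c d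
    have key : ∀ u : H ⊗[k] H, R2 ((a ⊗ₜ[k] u) ⊗ₜ[k] d)
        = (a * S d) ⊗ₜ[k] (LinearMap.mul' k H (S.lTensor H u)) := by
      intro u
      induction u using TensorProduct.induction_on with
      | zero => simp only [TensorProduct.tmul_zero, TensorProduct.zero_tmul,
          LinearMap.map_zero]
      | tmul p q =>
        simp [hR2def, hRdef, hμ2def, LinearMap.mul'_apply,
          Algebra.TensorProduct.tmul_mul_tmul]
      | add u1 u2 h1 h2 =>
        simp only [TensorProduct.tmul_add, TensorProduct.add_tmul, LinearMap.map_add, h1, h2,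
          TensorProduct.tmul_add]
    have lhs : ((Δ.lTensor H).rTensor H) ((a ⊗ₜ[k] c) ⊗ₜ[k] d)
        = (a ⊗ₜ[k] (Δ c)) ⊗ₜ[k] d := by
      simp
    rw [LinearMap.comp_apply, lhs, key (Δ c)]
    have collapse : LinearMap.mul' k H (S.lTensor H (Δ c))
        = algebraMap k H (Coalgebra.counit c) :=
      HopfAlgebra.mul_antipode_lTensor_comul_apply c
    rw [collapse]
    simp [hNdef, hκdef, hrudef, Algebra.algebraMap_eq_smul_one, TensorProduct.tmul_smul,
      TensorProduct.smul_tmul', smul_mul_assoc]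
  have step4 : ∀ t : H ⊗[k] H,
      (ru ∘ₗ κ ∘ₗ TensorProduct.map N LinearMap.id) (Δ.rTensor H t) = (ru ∘ₗ κ) t := by
    have hmap : (ru ∘ₗ κ ∘ₗ TensorProduct.map N LinearMap.id) ∘ₗ Δ.rTensor H = ru ∘ₗ κ := by
      apply TensorProduct.ext'
      intro a d
      have hN : N (Δ a) = a := by
        simp [hNdef, hΔdef]
      simp [hN]
    intro t
    exact LinearMap.congr_fun hmap t
  ext x
  calc aconv Δ G x
      = μ2 (TensorProduct.map Δ G (Δ x)) := rfl
    _ = P ((Δ.lTensor H) (Δ x)) := by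
        have e := LinearMap.congr_fun step1 (Δ x)
        simp only [LinearMap.comp_apply] at e
        exact e
    _ = P ((TensorProduct.assoc k H H H) ((Δ.rTensor H) (Δ x))) := by
        rw [hΔdef, Coalgebra.coassoc_apply]
    _ = R (((Δ.rTensor H).rTensor H) ((Δ.rTensor H) (Δ x))) := by
        have e := LinearMap.congr_fun step2 ((Δ.rTensor H) (Δ x))
        simp only [LinearMap.comp_apply] at e
        exact e
    _ = R ((((TensorProduct.assoc k H H H).symm.toLinearMap
            ∘ₗ Δ.lTensor H ∘ₗ Δ).rTensor H) (Δ x)) := by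
        rw [← LinearMap.rTensor_comp_apply, hΔdef, ← Coalgebra.coassoc_symm]
    _ = R2 (((Δ.lTensor H).rTensor H) ((Δ.rTensor H) (Δ x))) := by
        rw [LinearMap.rTensor_comp, LinearMap.rTensor_comp]
        simp [hR2def]
    _ = (ru ∘ₗ κ ∘ₗ TensorProduct.map N LinearMap.id) ((Δ.rTensor H) (Δ x)) := by
        have e := LinearMap.congr_fun step3 ((Δ.rTensor H) (Δ x))
        simp only [LinearMap.comp_apply] at e
        exact e
    _ = (ru ∘ₗ κ) (Δ x) := step4 (Δ x)
    _ = ru (algebraMap k H (Coalgebra.counit x)) := by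
        rw [LinearMap.comp_apply, hκdef]
        rw [LinearMap.comp_apply]
        rw [HopfAlgebra.mul_antipode_lTensor_comul_apply x]
    _ = acunit (H ⊗[k] H) x := by
        simp [hrudef, acunit, Algebra.TensorProduct.algebraMap_apply]

/-- The antipode is anti-comultiplicative. -/
theorem comul_comp_antipode :
    Coalgebra.comul ∘ₗ HopfAlgebra.antipode (R := k) (A := H)
      = (TensorProduct.comm k H H).toLinearMap ∘ₗ
        TensorProduct.map (HopfAlgebra.antipode (R := k)) (HopfAlgebra.antipode (R := k))
          ∘ₗ Coalgebra.comul := by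
  calc Coalgebra.comul ∘ₗ HopfAlgebra.antipode (R := k) (A := H)
      = aconv (Coalgebra.comul ∘ₗ HopfAlgebra.antipode (R := k)) (acunit (H ⊗[k] H)) :=
        (aconv_cunit_right _).symm
    _ = aconv (Coalgebra.comul ∘ₗ HopfAlgebra.antipode (R := k))
          (aconv Coalgebra.comul
            ((TensorProduct.comm k H H).toLinearMap ∘ₗ
              TensorProduct.map (HopfAlgebra.antipode (R := k))
                (HopfAlgebra.antipode (R := k)) ∘ₗ Coalgebra.comul)) := by
        rw [aconv_comul_G]
    _ = aconv (aconv (Coalgebra.comul ∘ₗ HopfAlgebra.antipode (R := k)) Coalgebra.comul)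
          ((TensorProduct.comm k H H).toLinearMap ∘ₗ
            TensorProduct.map (HopfAlgebra.antipode (R := k))
              (HopfAlgebra.antipode (R := k)) ∘ₗ Coalgebra.comul) :=
        (aconv_assoc _ _ _).symm
    _ = aconv (acunit (H ⊗[k] H))
          ((TensorProduct.comm k H H).toLinearMap ∘ₗ
            TensorProduct.map (HopfAlgebra.antipode (R := k))
              (HopfAlgebra.antipode (R := k)) ∘ₗ Coalgebra.comul) := by
        rw [aconv_comulS_comul]
    _ = _ := aconv_cunit_left _

theorem acunit_k : acunit (H := H) k = Coalgebra.counit (R := k) := by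
  ext x
  simp [acunit]

/-- The counit is preserved by the antipode. -/
theorem counit_comp_antipode :
    Coalgebra.counit ∘ₗ HopfAlgebra.antipode (R := k) (A := H)
      = Coalgebra.counit (R := k) (A := H) := by
  have h1 : aconv (Coalgebra.counit ∘ₗ HopfAlgebra.antipode (R := k) (A := H))
      Coalgebra.counit = acunit k := by
    have key : LinearMap.mul' k k ∘ₗ
          TensorProduct.map (Coalgebra.counit ∘ₗ HopfAlgebra.antipode (R := k) (A := H))
            Coalgebra.counit
        = Coalgebra.counit ∘ₗ LinearMap.mul' k H
            ∘ₗ (HopfAlgebra.antipode (R := k) (A := H)).rTensor H := by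
      apply TensorProduct.ext'
      intro a b
      simp [Bialgebra.counit_mul]
    ext x
    calc aconv (Coalgebra.counit ∘ₗ HopfAlgebra.antipode (R := k)) Coalgebra.counit x
        = (LinearMap.mul' k k ∘ₗ
            TensorProduct.map (Coalgebra.counit ∘ₗ HopfAlgebra.antipode (R := k))
              Coalgebra.counit) (Coalgebra.comul x) := rfl
      _ = Coalgebra.counit (LinearMap.mul' k H
            ((HopfAlgebra.antipode (R := k)).rTensor H (Coalgebra.comul x))) := by
          rw [LinearMap.congr_fun key (Coalgebra.comul x)]; rfl
      _ = acunit k x := by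
          rw [HopfAlgebra.mul_antipode_rTensor_comul_apply]
          simp [acunit]
  have h2 : aconv (Coalgebra.counit (R := k) (A := H)) Coalgebra.counit = acunit k := by
    have key : LinearMap.mul' k k ∘ₗ
          TensorProduct.map (Coalgebra.counit (R := k) (A := H)) Coalgebra.counit
        = Coalgebra.counit ∘ₗ (TensorProduct.lid k H).toLinearMap
            ∘ₗ (Coalgebra.counit (R := k) (A := H)).rTensor H := by
      apply TensorProduct.ext'
      intro a b
      simp [smul_eq_mul]
    ext x
    calc aconv (Coalgebra.counit (R := k) (A := H)) Coalgebra.counit x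
        = (LinearMap.mul' k k ∘ₗ
            TensorProduct.map (Coalgebra.counit (R := k) (A := H)) Coalgebra.counit)
          (Coalgebra.comul x) := rfl
      _ = Coalgebra.counit ((TensorProduct.lid k H)
            ((Coalgebra.counit (R := k)).rTensor H (Coalgebra.comul x))) := by
          rw [LinearMap.congr_fun key (Coalgebra.comul x)]; rfl
      _ = acunit k x := by
          rw [Coalgebra.rTensor_counit_comul]
          simp [acunit]
  calc Coalgebra.counit ∘ₗ HopfAlgebra.antipode (R := k) (A := H)
      = aconv (Coalgebra.counit ∘ₗ HopfAlgebra.antipode (R := k) (A := H)) (acunit k) :=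
        (aconv_cunit_right _).symm
    _ = aconv (Coalgebra.counit ∘ₗ HopfAlgebra.antipode (R := k) (A := H))
          (aconv Coalgebra.counit Coalgebra.counit) := by rw [h2]
    _ = aconv (aconv (Coalgebra.counit ∘ₗ HopfAlgebra.antipode (R := k) (A := H))
          Coalgebra.counit) Coalgebra.counit := (aconv_assoc _ _ _).symm
    _ = aconv (acunit k) Coalgebra.counit := by rw [h1]
    _ = Coalgebra.counit := aconv_cunit_left _

theorem comul_Sinv (Sinv : H →ₗ[k] H)
    (hS1 : ∀ x : H, Sinv (HopfAlgebra.antipode (R := k) x) = x)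
    (hS2 : ∀ x : H, HopfAlgebra.antipode (R := k) (Sinv x) = x) (x : H) :
    Coalgebra.comul (Sinv x)
      = (TensorProduct.comm k H H) (TensorProduct.map Sinv Sinv (Coalgebra.comul x)) := by
  have h := LinearMap.congr_fun (comul_comp_antipode (k := k) (H := H)) (Sinv x)
  simp only [LinearMap.comp_apply, LinearEquiv.coe_coe] at h
  rw [hS2 x] at h
  have inv : ∀ t : H ⊗[k] H,
      (TensorProduct.comm k H H) (TensorProduct.map Sinv Sinv
        ((TensorProduct.comm k H H) (TensorProduct.map (HopfAlgebra.antipode (R := k))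
          (HopfAlgebra.antipode (R := k)) t))) = t := by
    intro t
    induction t using TensorProduct.induction_on with
    | zero => simp
    | tmul a b => simp [hS1]
    | add t1 t2 h1 h2 => simp only [LinearMap.map_add, map_add, h1, h2]
  rw [h, inv]

theorem counit_Sinv (Sinv : H →ₗ[k] H)
    (hS2 : ∀ x : H, HopfAlgebra.antipode (R := k) (Sinv x) = x) (x : H) :
    Coalgebra.counit (R := k) (Sinv x) = Coalgebra.counit (R := k) x := by
  have h := LinearMap.congr_fun (counit_comp_antipode (k := k) (H := H)) (Sinv x)
  simp only [LinearMap.comp_apply] at h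
  rw [hS2 x] at h
  exact h.symm

end AuxHopf

/-- `h ⊗ v ↦ v ⊗ (S⁻¹(h) ▷ a) b`. -/
noncomputable def auxPhi (act : H →ₗ[k] B →ₗ[k] B) (Sinv : H →ₗ[k] H) (a b : B) :
    H ⊗[k] V →ₗ[k] V ⊗[k] B :=
  (TensorProduct.comm k B V).toLinearMap ∘ₗ
    TensorProduct.map (LinearMap.mulRight k b ∘ₗ act.flip a ∘ₗ Sinv) LinearMap.id

theorem auxPhi_tmul (act : H →ₗ[k] B →ₗ[k] B) (Sinv : H →ₗ[k] H) (a b : B)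
    (h : H) (v : V) :
    auxPhi k H B V act Sinv a b (h ⊗ₜ[k] v) = v ⊗ₜ[k] (act (Sinv h) a * b) := by
  simp [auxPhi]

theorem piAct_tmul (act : H →ₗ[k] B →ₗ[k] B) (Sinv : H →ₗ[k] H)
    (coactV : V →ₗ[k] H ⊗[k] V) (a : B) (ξ : V) (b : B) :
    piAct k H B V act Sinv coactV a (ξ ⊗ₜ[k] b)
      = auxPhi k H B V act Sinv a b (coactV ξ) := by
  have h0 : piAct k H B V act Sinv coactV a (ξ ⊗ₜ[k] b)
      = (TensorProduct.map LinearMap.id (innerPi k H B act Sinv))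
          ((TensorProduct.leftComm k B V (H ⊗[k] B))
            ((TensorProduct.map LinearMap.id (TensorProduct.assoc k V H B).toLinearMap)
              ((TensorProduct.map LinearMap.id
                  (TensorProduct.map (TensorProduct.comm k H V).toLinearMap LinearMap.id))
                (a ⊗ₜ[k] ((coactV ξ) ⊗ₜ[k] b))))) := by
    simp [piAct, _root_.piMap, TensorProduct.curry_apply]
  rw [h0]
  generalize coactV ξ = t
  induction t using TensorProduct.induction_on with
  | zero => simp
  | tmul h v => simp [auxPhi, innerPi, actT]
  | add t1 t2 h1 h2 =>
    simp only [TensorProduct.add_tmul, TensorProduct.tmul_add, LinearMap.map_add, map_add,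
      h1, h2]

/-- `(x ⊗ y) ⊗ v ↦ v ⊗ (S⁻¹(y) ▷ a)((S⁻¹(x) ▷ a') b)`. -/
noncomputable def auxTheta (act : H →ₗ[k] B →ₗ[k] B) (Sinv : H →ₗ[k] H) (a a' b : B) :
    (H ⊗[k] H) ⊗[k] V →ₗ[k] V ⊗[k] B :=
  (TensorProduct.comm k B V).toLinearMap ∘ₗ
    TensorProduct.map
      (LinearMap.mul' k B ∘ₗ
        TensorProduct.map (act.flip a ∘ₗ Sinv)
          (LinearMap.mulRight k b ∘ₗ act.flip a' ∘ₗ Sinv) ∘ₗ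
        (TensorProduct.comm k H H).toLinearMap)
      LinearMap.id

/-- Let `H` be a Hopf algebra with invertible antipode and `B` a
braided-commutative Yetter–Drinfeld `H`-module algebra.  For a finite-dimensional
left `H`-comodule `V`, the map `π(a)(ξ ⊗ b) = ξ₍₂₎ ⊗ (S⁻¹(ξ₍₁₎) ▷ a) b` on the
relative Hopf module `X = V ⊗ B` defines a unital algebra homomorphism
`π : B → End(X)`: `π(a a') = π(a) π(a')` and `π(1) = id`. -/
theorem piAct_algebra_homomorphism
    [FiniteDimensional k V]
    (act : H →ₗ[k] B →ₗ[k] B) (coact : B →ₗ[k] H ⊗[k] B) (Sinv : H →ₗ[k] H)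
    (hYD : BraidedCommYD act coact Sinv)
    (coactV : V →ₗ[k] H ⊗[k] V)
    (coactV_coassoc : ∀ v : V,
      (TensorProduct.map Coalgebra.comul LinearMap.id) (coactV v)
        = (TensorProduct.assoc k H H V).symm ((TensorProduct.map LinearMap.id coactV) (coactV v)))
    (coactV_counit : ∀ v : V,
      (TensorProduct.lid k V)
        ((TensorProduct.map (Coalgebra.counit (R := k)) LinearMap.id) (coactV v)) = v) :
    (∀ a a' : B, piAct k H B V act Sinv coactV (a * a')
        = (piAct k H B V act Sinv coactV a) ∘ₗ (piAct k H B V act Sinv coactV a')) ∧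
    piAct k H B V act Sinv coactV 1 = LinearMap.id := by
  constructor
  · intro a a'
    apply TensorProduct.ext'
    intro ξ b
    rw [LinearMap.comp_apply, piAct_tmul, piAct_tmul]
    have M1 : ∀ t : H ⊗[k] V, auxPhi k H B V act Sinv (a * a') b t
        = auxTheta k H B V act Sinv a a' b
            ((TensorProduct.map Coalgebra.comul LinearMap.id) t) := by
      intro t
      induction t using TensorProduct.induction_on with
      | zero => simp
      | tmul h v =>
        rw [TensorProduct.map_tmul, auxPhi_tmul]
        have hscalar : act (Sinv h) (a * a') * b
            = (LinearMap.mul' k B ∘ₗ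
                TensorProduct.map (act.flip a ∘ₗ Sinv)
                  (LinearMap.mulRight k b ∘ₗ act.flip a' ∘ₗ Sinv) ∘ₗ
                (TensorProduct.comm k H H).toLinearMap) (Coalgebra.comul h) := by
          rw [hYD.act_mul (Sinv h) a a']
          rw [comul_Sinv Sinv hYD.Sinv_antipode hYD.antipode_Sinv h]
          have sub : ∀ u : H ⊗[k] H,
              maMap k H B act
                  (((TensorProduct.comm k H H) (TensorProduct.map Sinv Sinv u))
                    ⊗ₜ[k] (a ⊗ₜ[k] a')) * b
              = (LinearMap.mul' k B ∘ₗ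
                  TensorProduct.map (act.flip a ∘ₗ Sinv)
                    (LinearMap.mulRight k b ∘ₗ act.flip a' ∘ₗ Sinv) ∘ₗ
                  (TensorProduct.comm k H H).toLinearMap) u := by
            intro u
            induction u using TensorProduct.induction_on with
            | zero => simp
            | tmul x y => simp [maMap, actT, mul_assoc]
            | add u1 u2 h1 h2 =>
              simp only [LinearMap.map_add, map_add, TensorProduct.add_tmul, add_mul,
                h1, h2]
          exact sub (Coalgebra.comul h)
        rw [hscalar]
        simp [auxTheta]
      | add t1 t2 h1 h2 =>
        simp only [LinearMap.map_add, map_add, h1, h2]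
    have M2 : ∀ t : H ⊗[k] V,
        piAct k H B V act Sinv coactV a (auxPhi k H B V act Sinv a' b t)
        = auxTheta k H B V act Sinv a a' b
            ((TensorProduct.assoc k H H V).symm
              ((TensorProduct.map LinearMap.id coactV) t)) := by
      intro t
      induction t using TensorProduct.induction_on with
      | zero => simp
      | tmul h v =>
        rw [auxPhi_tmul, piAct_tmul, TensorProduct.map_tmul]
        have sub : ∀ s : H ⊗[k] V,
            auxPhi k H B V act Sinv a (act (Sinv h) a' * b) s
            = auxTheta k H B V act Sinv a a' b
                ((TensorProduct.assoc k H H V).symm (h ⊗ₜ[k] s)) := by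
          intro s
          induction s using TensorProduct.induction_on with
          | zero => simp
          | tmul y v0 =>
            rw [auxPhi_tmul, TensorProduct.assoc_symm_tmul]
            simp [auxTheta, mul_assoc]
          | add s1 s2 h1 h2 =>
            simp only [TensorProduct.tmul_add, LinearMap.map_add, map_add, h1, h2]
        simpa using sub (coactV v)
      | add t1 t2 h1 h2 =>
        simp only [LinearMap.map_add, map_add, h1, h2]
    rw [M1 (coactV ξ), M2 (coactV ξ), coactV_coassoc ξ]
  · apply TensorProduct.ext'
    intro ξ b
    rw [piAct_tmul]
    have key : ∀ t : H ⊗[k] V, auxPhi k H B V act Sinv 1 b t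
        = ((TensorProduct.mk k V B).flip b)
            ((TensorProduct.lid k V)
              ((TensorProduct.map (Coalgebra.counit (R := k)) LinearMap.id) t)) := by
      intro t
      induction t using TensorProduct.induction_on with
      | zero => simp
      | tmul h v =>
        rw [auxPhi_tmul, hYD.act_one (Sinv h), counit_Sinv Sinv hYD.antipode_Sinv h]
        simp [smul_mul_assoc, TensorProduct.smul_tmul', TensorProduct.tmul_smul]
      | add t1 t2 h1 h2 =>
        simp only [LinearMap.map_add, map_add, h1, h2]
    rw [key (coactV ξ), coactV_counit ξ]
    simp
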